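/- Let d ≥ 1, α ∈ (0, 1), and let X ⊆ ℝ^d be a finite set partitioned as X = A ∪ B with A, B disjoint and A nonempty, such that |B| ≤ α·|X|. Then Cost₂(X, Cen(X)) ≥ Cost₂(A, Cen(A)) + ((1 − α)/α)·|X|·‖Cen(X) − Cen(A)‖₂². -/

import Mathlib

open Finset
open scoped Classical

noncomputable def Cost2 {d : ℕ} (P : Finset (EuclideanSpace ℝ (Fin d)))
    (c : EuclideanSpace ℝ (Fin d)) : ℝ :=
  ∑ p ∈ P, ‖p - c‖ ^ 2

noncomputable def Cen {d : ℕ} (P : Finset (EuclideanSpace ℝ (Fin d))) :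
    EuclideanSpace ℝ (Fin d) :=
  ((P.card : ℝ)⁻¹) • ∑ p ∈ P, p

lemma cen_sum {d : ℕ} (P : Finset (EuclideanSpace ℝ (Fin d))) (hP : P.Nonempty) :
    ∑ p ∈ P, p = (P.card : ℝ) • Cen P := by
  unfold Cen
  rw [smul_smul, mul_inv_cancel₀ (by exact_mod_cast hP.card_ne_zero), one_smul]

lemma biasvar {d : ℕ} (P : Finset (EuclideanSpace ℝ (Fin d))) (hP : P.Nonempty)
    (c : EuclideanSpace ℝ (Fin d)) :
    Cost2 P c = Cost2 P (Cen P) + (P.card : ℝ) * ‖Cen P - c‖ ^ 2 := by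
  unfold Cost2
  have h : ∀ p ∈ P, ‖p - c‖ ^ 2 =
      ‖p - Cen P‖ ^ 2 + ((2:ℝ) * inner ℝ (p - Cen P) (Cen P - c) + ‖Cen P - c‖ ^ 2) := by
    intro p _
    have hpc : p - c = (p - Cen P) + (Cen P - c) := by abel
    rw [hpc, @norm_add_sq_real]; ring
  rw [Finset.sum_congr rfl h, Finset.sum_add_distrib, Finset.sum_add_distrib]
  have hz : ∑ p ∈ P, (2:ℝ) * inner ℝ (p - Cen P) (Cen P - c) = 0 := by
    rw [← Finset.mul_sum, ← sum_inner]
    have h0 : ∑ p ∈ P, (p - Cen P) = 0 := by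
      rw [Finset.sum_sub_distrib, cen_sum P hP, Finset.sum_const, sub_eq_zero,
        ← Nat.cast_smul_eq_nsmul ℝ]
    rw [h0, inner_zero_left, mul_zero]
  rw [hz]
  rw [Finset.sum_const, nsmul_eq_mul]
  ring

lemma cost2_nonneg {d : ℕ} (P : Finset (EuclideanSpace ℝ (Fin d)))
    (c : EuclideanSpace ℝ (Fin d)) : 0 ≤ Cost2 P c :=
  Finset.sum_nonneg fun _ _ => by positivity

theorem stmt15 (d : ℕ) (hd : 1 ≤ d) (α : ℝ) (hα0 : 0 < α) (hα1 : α < 1)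
    (X A B : Finset (EuclideanSpace ℝ (Fin d)))
    (hpart : X = A ∪ B) (hdisj : Disjoint A B) (hA : A.Nonempty)
    (hB : (B.card : ℝ) ≤ α * (X.card : ℝ)) :
    Cost2 X (Cen X) ≥
      Cost2 A (Cen A) + ((1 - α) / α) * (X.card : ℝ) * ‖Cen X - Cen A‖ ^ 2 := by
  subst hpart
  rcases B.eq_empty_or_nonempty with hBe | hBne
  · subst hBe
    simp only [Finset.union_empty, sub_self, norm_zero]
    simp
  · set c := Cen (A ∪ B) with hc
    have hX : (A ∪ B).Nonempty := hA.mono Finset.subset_union_left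
    have hcard : ((A ∪ B).card : ℝ) = (A.card : ℝ) + (B.card : ℝ) := by
      rw [Finset.card_union_of_disjoint hdisj]; push_cast; ring
    set a : ℝ := (A.card : ℝ) with ha
    set b : ℝ := (B.card : ℝ) with hbdef
    have ha0 : 0 < a := by rw [ha]; exact_mod_cast hA.card_pos
    have hb0 : 0 < b := by rw [hbdef]; exact_mod_cast hBne.card_pos
    have hsplit : Cost2 (A ∪ B) c = Cost2 A c + Cost2 B c := by
      unfold Cost2
      exact Finset.sum_union hdisj
    have hmix : a • Cen A + b • Cen B = (a + b) • c := by
      rw [← cen_sum A hA, ← cen_sum B hBne, ← hcard, ← cen_sum (A ∪ B) hX,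
        Finset.sum_union hdisj]
    set u := Cen A - c with hu
    set v := Cen B - c with hv
    have huv : a • u + b • v = 0 := by
      rw [hu, hv, smul_sub, smul_sub]
      have : a • Cen A + b • Cen B - (a • c + b • c) = 0 := by
        rw [hmix, add_smul]; abel
      calc a • Cen A - a • c + (b • Cen B - b • c)
          = a • Cen A + b • Cen B - (a • c + b • c) := by abel
        _ = 0 := this
    have hnv : b * ‖v‖ = a * ‖u‖ := by
      have : b • v = -(a • u) := by
        rw [← add_eq_zero_iff_eq_neg] at *
        linear_combination (norm := module) huv
      have h2 := congrArg norm this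
      rw [norm_smul, norm_neg, norm_smul, Real.norm_eq_abs, Real.norm_eq_abs,
        abs_of_pos hb0, abs_of_pos ha0] at h2
      exact h2
    have hbv : b * ‖v‖ ^ 2 = a ^ 2 / b * ‖u‖ ^ 2 := by
      have hsq : (b * ‖v‖) ^ 2 = (a * ‖u‖) ^ 2 := by rw [hnv]
      rw [div_mul_eq_mul_div, eq_div_iff hb0.ne']
      linear_combination hsq
    have hcost : Cost2 (A ∪ B) c =
        Cost2 A (Cen A) + a * ‖u‖ ^ 2 + (Cost2 B (Cen B) + b * ‖v‖ ^ 2) := by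
      rw [hsplit, biasvar A hA c, biasvar B hBne c]
    have hnorm : ‖c - Cen A‖ = ‖u‖ := by rw [hu, norm_sub_rev]
    rw [hcost, hnorm, hcard, hbv]
    have hs : (0:ℝ) ≤ ‖u‖ ^ 2 := by positivity
    have hBc : Cost2 B (Cen B) ≥ 0 := cost2_nonneg _ _
    have hb' : b ≤ α * (a + b) := by rw [← hcard]; exact hB
    have key : ((1 - α) / α) * (a + b) * ‖u‖ ^ 2 ≤ a * ‖u‖ ^ 2 + a ^ 2 / b * ‖u‖ ^ 2 := by
      have hab : 0 < α * b := mul_pos hα0 hb0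
      rw [div_mul_eq_mul_div, div_mul_eq_mul_div, ← sub_nonneg]
      have heq : a * ‖u‖ ^ 2 + a ^ 2 / b * ‖u‖ ^ 2 - (1 - α) * (a + b) * ‖u‖ ^ 2 / α
          = ((α * a * (a + b) - (1 - α) * b * (a + b)) * ‖u‖ ^ 2) / (α * b) := by
        field_simp
        ring
      rw [heq]
      apply div_nonneg _ hab.le
      nlinarith [mul_le_mul_of_nonneg_left (mul_le_mul_of_nonneg_right hb' hs)
        (by positivity : (0:ℝ) ≤ a + b), ha0, hb0, hs]
    linarith
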